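/- Let b ≥ 2 be an integer. The real function φ defined for 0 ≤ k < 1 by φ(k) = p'/(1 − p'), where p' = (1/2)·(1 − ((1−k)/(1+k))^b), satisfies φ(0) = 0 and has derivative b at k = 0 (derivative within [0,1)). Equivalently, the composite map k ↦ p = k/(1+k) ↦ p' = (1/2)(1 − (1−2p)^b) ↦ k' = p'/(1−p') carries the fixed point 0 to 0 with derivative equal to the blocking factor b. -/

import Mathlib

/-- **Derivative of the renormalized Boltzmann factor at the fixed point.**  For a
blocking factor `b ≥ 2`, the function `φ(k) = p'/(1 − p')` with
`p' = (1/2)(1 − ((1−k)/(1+k))^b)`, defined for `0 ≤ k < 1`, satisfies `φ(0) = 0` and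
has derivative `b` at `k = 0` (derivative within `[0,1)`).  Equivalently, the
composite `k ↦ p = k/(1+k) ↦ p' = (1/2)(1 − (1−2p)^b) ↦ k' = p'/(1−p')` (which
coincides with `φ` on `[0,1)`) carries the fixed point `0` to `0` with derivative
equal to the blocking factor `b`. -/
theorem renormalized_boltzmann_derivative (b : ℕ) (hb : 2 ≤ b) :
    ((1 / 2 : ℝ) * (1 - ((1 - 0) / (1 + 0)) ^ b)) /
        (1 - (1 / 2 : ℝ) * (1 - ((1 - 0) / (1 + 0)) ^ b)) = 0 ∧
    HasDerivWithinAt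
      (fun k : ℝ =>
        ((1 / 2) * (1 - ((1 - k) / (1 + k)) ^ b)) /
          (1 - (1 / 2) * (1 - ((1 - k) / (1 + k)) ^ b)))
      (b : ℝ) (Set.Ico 0 1) 0 ∧
    (∀ k : ℝ, k ∈ Set.Ico (0 : ℝ) 1 →
      ((1 / 2) * (1 - (1 - 2 * (k / (1 + k))) ^ b)) /
          (1 - (1 / 2) * (1 - (1 - 2 * (k / (1 + k))) ^ b)) =
        ((1 / 2) * (1 - ((1 - k) / (1 + k)) ^ b)) /
          (1 - (1 / 2) * (1 - ((1 - k) / (1 + k)) ^ b))) := by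
  refine ⟨by norm_num, ?_, ?_⟩
  · have h1 : HasDerivAt (fun k : ℝ => (1 - k) / (1 + k)) (-2) 0 := by
      have := (((hasDerivAt_id (0:ℝ)).const_sub 1).div
        ((hasDerivAt_id (0:ℝ)).const_add 1) (by norm_num))
      refine this.congr_deriv ?_
      norm_num
    have h2 : HasDerivAt (fun k : ℝ => ((1 - k) / (1 + k)) ^ b)
        (-2 * b) 0 := by
      have := h1.pow b
      refine this.congr_deriv ?_
      norm_num; ring
    have h3 : HasDerivAt (fun k : ℝ =>
        ((1 / 2) * (1 - ((1 - k) / (1 + k)) ^ b)) /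
          (1 - (1 / 2) * (1 - ((1 - k) / (1 + k)) ^ b))) (b : ℝ) 0 := by
      have hnum : HasDerivAt (fun k : ℝ => (1 / 2 : ℝ) * (1 - ((1 - k) / (1 + k)) ^ b))
          (b : ℝ) 0 := by
        have := (h2.const_sub 1).const_mul (1/2 : ℝ)
        refine this.congr_deriv ?_
        ring
      have hden : HasDerivAt (fun k : ℝ => 1 - (1 / 2 : ℝ) * (1 - ((1 - k) / (1 + k)) ^ b))
          (-(b : ℝ)) 0 := by
        have := hnum.const_sub 1
        convert this using 1
      have := hnum.div hden (by norm_num)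
      refine this.congr_deriv ?_
      norm_num
    exact h3.hasDerivWithinAt
  · intro k hk
    have hk1 : (1 : ℝ) + k ≠ 0 := by nlinarith [hk.1]
    have : 1 - 2 * (k / (1 + k)) = (1 - k) / (1 + k) := by field_simp; ring
    rw [this]
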